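/- Let γ > 1, let A, B: ℝ → (0,∞) be C¹ functions, let Ω ⊆ ℝ² be open, and let ψ ∈ C²(Ω) be such that at every point the Bernoulli relation ½|∇ψ|² = B(ψ)ρ² − A(ψ)ρ^{γ+1} has a solution ρ > 0 on the subsonic branch ρ^{γ−1} > 2B(ψ)/((γ+1)A(ψ)) (so ρ is a C¹ function on Ω). Then at every point of Ω, the nondivergence-form equation Σ_{i,j} a_{ij}(ψ,∇ψ) ψ_{x_i x_j} = F(ψ,∇ψ) holds if and only if the divergence-form equation ∇·(∇ψ/ρ) = B′(ψ) ρ − (1/γ) A′(ψ) ρ^γ holds. -/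

import Mathlib

open Set
open scoped ENNReal NNReal

noncomputable section

abbrev E2 : Type := EuclideanSpace ℝ (Fin 2)

/-- The point `(a, b)` of the Euclidean plane. -/
def pt (a b : ℝ) : E2 := (WithLp.equiv 2 (Fin 2 → ℝ)).symm ![a, b]

/-- Partial derivative in the `i`-th coordinate direction. -/
def pd (i : Fin 2) (f : E2 → ℝ) : E2 → ℝ :=
  fun x => fderiv ℝ f x (EuclideanSpace.single i 1)

/-- Iterated mixed partial derivative `∂₁^{k₁} ∂₂^{k₂} f`. -/
def Dmix (k₁ k₂ : ℕ) (f : E2 → ℝ) : E2 → ℝ := (pd 0)^[k₁] ((pd 1)^[k₂] f)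

/-- `ρ` is the subsonic-branch solution of the Bernoulli relation
`½|∇ψ|² = B(ψ)ρ² - A(ψ)ρ^{γ+1}` at the point `x`. -/
def BernoulliBranch (γ : ℝ) (A B : ℝ → ℝ) (ψ : E2 → ℝ) (ρ : ℝ) (x : E2) : Prop :=
  0 < ρ ∧ 2 * B (ψ x) / ((γ + 1) * A (ψ x)) < ρ ^ (γ - 1) ∧
    (pd 0 ψ x ^ 2 + pd 1 ψ x ^ 2) / 2 = B (ψ x) * ρ ^ 2 - A (ψ x) * ρ ^ (γ + 1)

/-- The nondivergence-form reduced equation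
`Σ_{i,j} a_{ij}(ψ,∇ψ) ψ_{x_i x_j} = F(ψ,∇ψ)` at the point `x`, with density value `ρ`. -/
def NonDivEq (γ : ℝ) (A B : ℝ → ℝ) (ψ : E2 → ℝ) (ρ : ℝ) (x : E2) : Prop :=
  ((γ - 1) * A (ψ x) * ρ ^ (γ + 1) - pd 1 ψ x ^ 2) * pd 0 (pd 0 ψ) x +
      pd 0 ψ x * pd 1 ψ x * (pd 0 (pd 1 ψ) x + pd 1 (pd 0 ψ) x) +
      ((γ - 1) * A (ψ x) * ρ ^ (γ + 1) - pd 0 ψ x ^ 2) * pd 1 (pd 1 ψ) x =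
    ((γ - 1) / γ) * ρ ^ (γ + 3) *
      (γ * A (ψ x) * deriv B (ψ x) - 2 * deriv A (ψ x) * B (ψ x) +
        A (ψ x) * deriv A (ψ x) * ρ ^ (γ - 1))

/-- The reduced elliptic equation for the stream function on `Ω`: at every point the
Bernoulli relation is solvable on the subsonic branch and, with that density,
the equation `a_{ij}(ψ,∇ψ) ψ_{x_i x_j} = F(ψ,∇ψ)` holds. -/
def ReducedEq (γ : ℝ) (A B : ℝ → ℝ) (Ω : Set E2) (ψ : E2 → ℝ) : Prop :=
  ∀ x ∈ Ω, ∃ ρ : ℝ, BernoulliBranch γ A B ψ ρ x ∧ NonDivEq γ A B ψ ρ x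

lemma keyAlg (g Av Bv Ap Bp r P p1 p2 p11 p22 m1 m2 r1 r2 : ℝ)
    (hg : g ≠ 0) (hr : r ≠ 0)
    (hD : 2 * Bv * r - (g + 1) * (Av * (P * r)) ≠ 0)
    (bern : (p1 ^ 2 + p2 ^ 2) / 2 = Bv * r ^ 2 - Av * (P * r ^ 2))
    (h1 : p1 * p11 + p2 * m1 =
      Bp * p1 * r ^ 2 + 2 * Bv * r * r1 - Ap * p1 * (P * r ^ 2) - (g + 1) * (Av * (P * r)) * r1)
    (h2 : p1 * m2 + p2 * p22 =
      Bp * p2 * r ^ 2 + 2 * Bv * r * r2 - Ap * p2 * (P * r ^ 2) - (g + 1) * (Av * (P * r)) * r2) :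
    (((g - 1) * Av * (P * r ^ 2) - p2 ^ 2) * p11 + p1 * p2 * (m1 + m2) +
        ((g - 1) * Av * (P * r ^ 2) - p1 ^ 2) * p22 =
      (g - 1) / g * (P * r ^ 4) * (g * Av * Bp - 2 * Ap * Bv + Av * Ap * P)) ↔
    ((p11 * r - p1 * r1) / r ^ 2 + (p22 * r - p2 * r2) / r ^ 2 =
      Bp * r - 1 / g * Ap * (P * r)) := by
  have hinv : (1 / g) * g = 1 := by field_simp
  constructor
  · intro hnd
    have key : (2 * Bv * r - (g + 1) * (Av * (P * r))) *
        ((p11 * r - p1 * r1 + (p22 * r - p2 * r2)) - (Bp * r - 1 / g * Ap * (P * r)) * r ^ 2) = 0 := by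
      linear_combination p1 * h1 + p2 * h2 +
        (2 * (Bp - Ap * P) * r ^ 2 - 2 * (p11 + p22)) * bern - hnd +
        (P * r ^ 4 * (2 * Bv * Ap + Av * Bp - 2 * Av * (Ap * P) - g * (Av * Bp))) * hinv
    have h0 : (p11 * r - p1 * r1 + (p22 * r - p2 * r2)) - (Bp * r - 1 / g * Ap * (P * r)) * r ^ 2 = 0 :=
      by rcases mul_eq_zero.mp key with h | h
         · exact absurd h hD
         · exact h
    rw [← add_div, div_eq_iff (pow_ne_zero 2 hr)]
    linarith
  · intro hdv
    rw [← add_div, div_eq_iff (pow_ne_zero 2 hr)] at hdv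
    linear_combination p1 * h1 + p2 * h2 +
      (2 * (Bp - Ap * P) * r ^ 2 - 2 * (p11 + p22)) * bern +
      (P * r ^ 4 * (2 * Bv * Ap + Av * Bp - 2 * Av * (Ap * P) - g * (Av * Bp))) * hinv -
      (2 * Bv * r - (g + 1) * (Av * (P * r))) * hdv

lemma bern_unique {γ a b : ℝ} (hγ : 1 < γ) (ha : 0 < a) (hb : 0 < b)
    {ρ ρ' : ℝ} (hρ : 0 < ρ) (hρ' : 0 < ρ')
    (hbr : 2 * b / ((γ + 1) * a) < ρ ^ (γ - 1)) (hbr' : 2 * b / ((γ + 1) * a) < ρ' ^ (γ - 1))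
    (heq : b * ρ ^ 2 - a * ρ ^ (γ + 1) = b * ρ' ^ 2 - a * ρ' ^ (γ + 1)) : ρ = ρ' := by
  set c : ℝ := 2 * b / ((γ + 1) * a) with hc
  have hγ1 : (0:ℝ) < γ - 1 := by linarith
  have hγ1' : (0:ℝ) < γ + 1 := by linarith
  have hcpos : 0 < c := div_pos (by linarith) (by positivity)
  set r₀ : ℝ := c ^ (1 / (γ - 1)) with hr₀
  have hr₀pos : 0 < r₀ := Real.rpow_pos_of_pos hcpos _
  have hmem : ∀ r : ℝ, 0 < r → c < r ^ (γ - 1) → r₀ < r := by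
    intro r hr h
    have h1 : r₀ < (r ^ (γ - 1)) ^ (1 / (γ - 1)) :=
      Real.rpow_lt_rpow hcpos.le h (by positivity)
    have h2 : (r ^ (γ - 1)) ^ (1 / (γ - 1)) = r := by
      rw [← Real.rpow_mul hr.le]
      rw [show (γ - 1) * (1 / (γ - 1)) = 1 by field_simp, Real.rpow_one]
    rwa [h2] at h1
  have hρmem := hmem ρ hρ hbr
  have hρ'mem := hmem ρ' hρ' hbr'
  have hasd : ∀ r : ℝ, 0 < r →
      HasDerivAt (fun t : ℝ => b * t ^ 2 - a * t ^ (γ + 1))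
        (b * (2 * r) - a * ((γ + 1) * r ^ γ)) r := by
    intro r hr
    have h1 : HasDerivAt (fun t : ℝ => t ^ 2) (2 * r) r := by
      simpa using hasDerivAt_pow 2 r
    have h2 : HasDerivAt (fun t : ℝ => t ^ (γ + 1)) ((γ + 1) * r ^ γ) r := by
      have := Real.hasDerivAt_rpow_const (x := r) (p := γ + 1) (Or.inl hr.ne')
      simpa using this
    exact (h1.const_mul b).sub (h2.const_mul a)
  have hanti : StrictAntiOn (fun t : ℝ => b * t ^ 2 - a * t ^ (γ + 1)) (Set.Ici r₀) := by
    apply strictAntiOn_of_deriv_neg (convex_Ici r₀)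
    · intro r hr
      exact (hasd r (lt_of_lt_of_le hr₀pos hr)).continuousAt.continuousWithinAt
    · intro r hr
      rw [interior_Ici] at hr
      have hrpos : 0 < r := hr₀pos.trans hr
      rw [(hasd r hrpos).deriv]
      have hcr : c < r ^ (γ - 1) := by
        have : r₀ ^ (γ - 1) < r ^ (γ - 1) := Real.rpow_lt_rpow hr₀pos.le hr hγ1
        have h2 : r₀ ^ (γ - 1) = c := by
          rw [hr₀, ← Real.rpow_mul hcpos.le]
          rw [show (1 / (γ - 1)) * (γ - 1) = 1 by field_simp, Real.rpow_one]
        linarith [h2 ▸ this]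
      have h2b : 2 * b < (γ + 1) * a * r ^ (γ - 1) := by
        rw [hc] at hcr
        calc 2 * b = (γ + 1) * a * (2 * b / ((γ + 1) * a)) := by field_simp
        _ < (γ + 1) * a * r ^ (γ - 1) := by
            apply mul_lt_mul_of_pos_left hcr (by positivity)
      have hrg : r ^ γ = r ^ (γ - 1) * r := by
        rw [← Real.rpow_add_one hrpos.ne']; ring_nf
      rw [hrg]
      nlinarith [mul_lt_mul_of_pos_right h2b hrpos]
  exact hanti.injOn (Set.mem_Ici.mpr hρmem.le) (Set.mem_Ici.mpr hρ'mem.le) heq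

set_option maxHeartbeats 2000000 in
theorem divergence_form_equivalence
    (γ : ℝ) (hγ : 1 < γ) (A B : ℝ → ℝ)
    (hA : ContDiff ℝ 1 A) (hB : ContDiff ℝ 1 B)
    (hApos : ∀ s, 0 < A s) (hBpos : ∀ s, 0 < B s)
    (Ω : Set E2) (hΩ : IsOpen Ω) (ψ : E2 → ℝ) (hψ : ContDiffOn ℝ 2 ψ Ω)
    (hex : ∀ x ∈ Ω, ∃ ρ : ℝ, BernoulliBranch γ A B ψ ρ x) :
    ∃ ρf : E2 → ℝ,
      (∀ x ∈ Ω, BernoulliBranch γ A B ψ (ρf x) x) ∧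
      ContDiffOn ℝ 1 ρf Ω ∧
      ∀ x ∈ Ω,
        (NonDivEq γ A B ψ (ρf x) x ↔
          pd 0 (fun y => pd 0 ψ y / ρf y) x + pd 1 (fun y => pd 1 ψ y / ρf y) x =
            deriv B (ψ x) * ρf x - (1 / γ) * deriv A (ψ x) * ρf x ^ γ) := by
  classical
  have hγ0 : γ ≠ 0 := by positivity
  obtain ⟨ρf, hbr⟩ : ∃ ρf : E2 → ℝ, ∀ x ∈ Ω, BernoulliBranch γ A B ψ (ρf x) x :=
    ⟨fun x => if h : x ∈ Ω then (hex x h).choose else 1,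
      fun x hx => by simp only [dif_pos hx]; exact (hex x hx).choose_spec⟩
  -- uniqueness of the subsonic branch density
  have huniq : ∀ x ∈ Ω, ∀ ρ' : ℝ, BernoulliBranch γ A B ψ ρ' x → ρ' = ρf x := by
    intro x hx ρ' h'
    obtain ⟨h1, h2, h3⟩ := h'
    obtain ⟨g1, g2, g3⟩ := hbr x hx
    exact bern_unique hγ (hApos (ψ x)) (hBpos (ψ x)) h1 g1 h2 g2 (h3 ▸ g3 ▸ rfl)
  -- first derivatives of ψ are C¹ on Ω
  have hψ' : ContDiffOn ℝ 1 (fderiv ℝ ψ) Ω := hψ.fderiv_of_isOpen hΩ (by norm_num)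
  have hpdC : ∀ j : Fin 2, ContDiffOn ℝ 1 (pd j ψ) Ω := by
    intro j
    exact (ContinuousLinearMap.apply ℝ ℝ (EuclideanSpace.single j 1)).contDiff.comp_contDiffOn hψ'
  have hqC : ContDiffOn ℝ 1 (fun y => (pd 0 ψ y ^ 2 + pd 1 ψ y ^ 2) / 2) Ω := by
    simp only [pow_two]
    exact (((hpdC 0).mul (hpdC 0)).add ((hpdC 1).mul (hpdC 1))).div_const 2
  -- ρf is C¹ at every point of Ω (implicit function theorem)
  have hCD : ∀ x₀ ∈ Ω, ContDiffAt ℝ 1 ρf x₀ := by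
    intro x₀ hx₀
    obtain ⟨hρ0pos, hρ0br, hρ0eq⟩ := hbr x₀ hx₀
    have hmem : Ω ∈ nhds x₀ := hΩ.mem_nhds hx₀
    have hψx : ContDiffAt ℝ 2 ψ x₀ := hψ.contDiffAt hmem
    have hψd : DifferentiableAt ℝ ψ x₀ := hψx.differentiableAt (by norm_num)
    have hqx : ContDiffAt ℝ 1 (fun y => (pd 0 ψ y ^ 2 + pd 1 ψ y ^ 2) / 2) x₀ :=
      hqC.contDiffAt hmem
    set ρ₀ : ℝ := ρf x₀ with hρ₀def
    set a₀ : ℝ := A (ψ x₀) with ha₀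
    set b₀ : ℝ := B (ψ x₀) with hb₀
    have ha₀pos : 0 < a₀ := hApos _
    have hb₀pos : 0 < b₀ := hBpos _
    set G : E2 × ℝ → ℝ :=
      fun p => B (ψ p.1) * p.2 ^ 2 - A (ψ p.1) * p.2 ^ (γ + 1) -
        (pd 0 ψ p.1 ^ 2 + pd 1 ψ p.1 ^ 2) / 2 with hGdef
    set Lψ : E2 →L[ℝ] ℝ := fderiv ℝ ψ x₀ with hLψ
    set Lq : E2 →L[ℝ] ℝ := fderiv ℝ (fun y => (pd 0 ψ y ^ 2 + pd 1 ψ y ^ 2) / 2) x₀ with hLq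
    set Lb : E2 →L[ℝ] ℝ := deriv B (ψ x₀) • Lψ with hLb
    set La : E2 →L[ℝ] ℝ := deriv A (ψ x₀) • Lψ with hLa
    set d : ℝ := 2 * b₀ * ρ₀ - (γ + 1) * a₀ * ρ₀ ^ γ with hddef
    have hρgam : ρ₀ ^ γ = ρ₀ ^ (γ - 1) * ρ₀ := by
      rw [← Real.rpow_add_one hρ0pos.ne']; ring_nf
    have hdneg : d < 0 := by
      have h2b : 2 * b₀ < (γ + 1) * a₀ * ρ₀ ^ (γ - 1) := by
        rw [ha₀, hb₀]
        calc 2 * B (ψ x₀) = (γ + 1) * A (ψ x₀) * (2 * B (ψ x₀) / ((γ + 1) * A (ψ x₀))) := by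
              have : (γ + 1) * A (ψ x₀) ≠ 0 := by positivity
              field_simp
              rw [mul_div_assoc, div_self (hApos _).ne', mul_one]
        _ < _ := mul_lt_mul_of_pos_left hρ0br (by positivity)
      rw [hddef, hρgam]
      nlinarith [mul_lt_mul_of_pos_right h2b hρ0pos]
    have hdne : d ≠ 0 := hdneg.ne
    set Lc : E2 →L[ℝ] ℝ := ρ₀ ^ 2 • Lb - ρ₀ ^ (γ + 1) • La - Lq with hLc
    set fst2 : E2 × ℝ →L[ℝ] E2 := ContinuousLinearMap.fst ℝ E2 ℝ with hfst2
    set snd2 : E2 × ℝ →L[ℝ] ℝ := ContinuousLinearMap.snd ℝ E2 ℝ with hsnd2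
    -- derivative of G
    have hb : HasFDerivAt (fun y => B (ψ y)) Lb x₀ :=
      ((hB.differentiable one_ne_zero (ψ x₀)).hasDerivAt).comp_hasFDerivAt x₀ hψd.hasFDerivAt
    have haf : HasFDerivAt (fun y => A (ψ y)) La x₀ :=
      ((hA.differentiable one_ne_zero (ψ x₀)).hasDerivAt).comp_hasFDerivAt x₀ hψd.hasFDerivAt
    have hqf : HasFDerivAt (fun y => (pd 0 ψ y ^ 2 + pd 1 ψ y ^ 2) / 2) Lq x₀ :=
      (hqx.differentiableAt one_ne_zero).hasFDerivAt
    have hBp : HasFDerivAt (fun p : E2 × ℝ => B (ψ p.1)) (Lb.comp fst2) (x₀, ρ₀) :=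
      by have h := hb.comp (x₀, ρ₀) (hasFDerivAt_fst (𝕜 := ℝ) (F := ℝ) (p := (x₀, ρ₀))); exact h
    have hAp : HasFDerivAt (fun p : E2 × ℝ => A (ψ p.1)) (La.comp fst2) (x₀, ρ₀) :=
      by have h := haf.comp (x₀, ρ₀) (hasFDerivAt_fst (𝕜 := ℝ) (F := ℝ) (p := (x₀, ρ₀))); exact h
    have hQp : HasFDerivAt (fun p : E2 × ℝ => (pd 0 ψ p.1 ^ 2 + pd 1 ψ p.1 ^ 2) / 2)
        (Lq.comp fst2) (x₀, ρ₀) := by have h := hqf.comp (x₀, ρ₀) (hasFDerivAt_fst (𝕜 := ℝ) (F := ℝ) (p := (x₀, ρ₀))); exact h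
    have hsq : HasFDerivAt (fun p : E2 × ℝ => p.2 ^ 2) ((2 * ρ₀) • snd2) (x₀, ρ₀) := by
      have h0 : HasDerivAt (fun t : ℝ => t ^ 2) (2 * ρ₀) ρ₀ := by simpa using hasDerivAt_pow 2 ρ₀
      have h := h0.comp_hasFDerivAt (x₀, ρ₀) (hasFDerivAt_snd (𝕜 := ℝ) (E := E2) (F := ℝ) (p := (x₀, ρ₀))); exact h
    have hrp : HasFDerivAt (fun p : E2 × ℝ => p.2 ^ (γ + 1)) (((γ + 1) * ρ₀ ^ γ) • snd2)
        (x₀, ρ₀) := by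
      have h0 : HasDerivAt (fun t : ℝ => t ^ (γ + 1)) ((γ + 1) * ρ₀ ^ γ) ρ₀ := by
        have := Real.hasDerivAt_rpow_const (x := ρ₀) (p := γ + 1) (Or.inl hρ0pos.ne')
        simpa [show γ + 1 - 1 = γ by ring] using this
      have h := h0.comp_hasFDerivAt (x₀, ρ₀) (hasFDerivAt_snd (𝕜 := ℝ) (E := E2) (F := ℝ) (p := (x₀, ρ₀))); exact h
    have hG : HasFDerivAt G (Lc.comp fst2 + d • snd2) (x₀, ρ₀) := by
      have hcomb := ((hBp.mul hsq).sub (hAp.mul hrp)).sub hQp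
      have heqL : (B (ψ (x₀, ρ₀).1) • ((2 * ρ₀) • snd2) + ((x₀, ρ₀).2 ^ 2) • Lb.comp fst2 -
            (A (ψ (x₀, ρ₀).1) • (((γ + 1) * ρ₀ ^ γ) • snd2) +
              ((x₀, ρ₀).2 ^ (γ + 1)) • La.comp fst2)) - Lq.comp fst2
          = Lc.comp fst2 + d • snd2 := by
        apply ContinuousLinearMap.ext
        intro p
        simp only [ContinuousLinearMap.add_apply, ContinuousLinearMap.sub_apply,
          ContinuousLinearMap.smul_apply, ContinuousLinearMap.comp_apply, hLc, hddef,
          ContinuousLinearMap.coe_sub', Pi.sub_apply, ContinuousLinearMap.coe_smul',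
          Pi.smul_apply, smul_eq_mul, ha₀, hb₀]
        ring
      rw [← heqL]
      exact hcomb
    have hΦ' : HasFDerivAt (fun p : E2 × ℝ => (p.1, G p))
        (fst2.prod (Lc.comp fst2 + d • snd2)) (x₀, ρ₀) := (hasFDerivAt_fst (𝕜 := ℝ) (E := E2) (F := ℝ) (p := (x₀, ρ₀))).prodMk hG
    -- the derivative as a continuous linear equivalence
    set Gc : E2 × ℝ →L[ℝ] E2 × ℝ := fst2.prod (d⁻¹ • (snd2 - Lc.comp fst2)) with hGc
    have hleft : Function.LeftInverse Gc (fst2.prod (Lc.comp fst2 + d • snd2)) := by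
      intro p
      simp only [hGc, hfst2, hsnd2, ContinuousLinearMap.prod_apply,
        ContinuousLinearMap.comp_apply, ContinuousLinearMap.add_apply,
        ContinuousLinearMap.sub_apply, ContinuousLinearMap.smul_apply,
        ContinuousLinearMap.coe_fst', ContinuousLinearMap.coe_snd', smul_eq_mul]
      refine Prod.ext rfl ?_
      simp only []
      field_simp
      ring
    have hright : Function.RightInverse Gc (fst2.prod (Lc.comp fst2 + d • snd2)) := by
      intro p
      simp only [hGc, hfst2, hsnd2, ContinuousLinearMap.prod_apply,
        ContinuousLinearMap.comp_apply, ContinuousLinearMap.add_apply,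
        ContinuousLinearMap.sub_apply, ContinuousLinearMap.smul_apply,
        ContinuousLinearMap.coe_fst', ContinuousLinearMap.coe_snd', smul_eq_mul]
      refine Prod.ext rfl ?_
      simp only []
      field_simp
      ring
    set Φeq : (E2 × ℝ) ≃L[ℝ] (E2 × ℝ) :=
      ContinuousLinearEquiv.equivOfInverse _ _ hleft hright with hΦeq
    have hΦc : ContDiffAt ℝ 1 (fun p : E2 × ℝ => (p.1, G p)) (x₀, ρ₀) := by
      apply ContDiffAt.prodMk contDiffAt_fst
      refine ContDiffAt.sub (ContDiffAt.sub ?_ ?_) ?_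
      · exact ((hB.contDiffAt.comp (x₀, ρ₀)
            ((hψx.of_le (by norm_num)).comp (x₀, ρ₀) contDiffAt_fst)).mul
          ((contDiff_snd.pow 2).contDiffAt))
      · exact ((hA.contDiffAt.comp (x₀, ρ₀)
            ((hψx.of_le (by norm_num)).comp (x₀, ρ₀) contDiffAt_fst)).mul
          ((Real.contDiffAt_rpow_const_of_ne hρ0pos.ne').comp (x₀, ρ₀) contDiffAt_snd))
      · exact hqx.comp (x₀, ρ₀) contDiffAt_fst
    have hΦd : HasFDerivAt (fun p : E2 × ℝ => (p.1, G p)) (Φeq : (E2 × ℝ) →L[ℝ] (E2 × ℝ))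
        (x₀, ρ₀) := hΦ'
    have hs : HasStrictFDerivAt (fun p : E2 × ℝ => (p.1, G p))
        (Φeq : (E2 × ℝ) →L[ℝ] (E2 × ℝ)) (x₀, ρ₀) := hΦc.hasStrictFDerivAt' hΦd one_ne_zero
    set Ψ : E2 × ℝ → E2 × ℝ := hs.localInverse _ _ _ with hΨdef
    have hΨc : ContDiffAt ℝ 1 Ψ ((fun p : E2 × ℝ => (p.1, G p)) (x₀, ρ₀)) :=
      hΦc.to_localInverse hΦd one_ne_zero
    have hG0 : G (x₀, ρ₀) = 0 := by
      have hGr : G (x₀, ρ₀) =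
          b₀ * ρ₀ ^ 2 - a₀ * ρ₀ ^ (γ + 1) - (pd 0 ψ x₀ ^ 2 + pd 1 ψ x₀ ^ 2) / 2 := rfl
      rw [hGr]
      linarith [hρ0eq]
    have hΨ0 : Ψ (x₀, 0) = (x₀, ρ₀) := by
      have h := hs.localInverse_apply_image
      simp only [hG0] at h
      exact h
    have hΨc' : ContDiffAt ℝ 1 Ψ (x₀, 0) := by
      have h := hΨc
      simp only [hG0] at h
      exact h
    have hjc : ContDiffAt ℝ 1 (fun x : E2 => ((x, (0:ℝ)) : E2 × ℝ)) x₀ :=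
      contDiffAt_id.prodMk contDiffAt_const
    have hrCD : ContDiffAt ℝ 1 (fun x : E2 => (Ψ (x, 0)).2) x₀ := by
      have h1 : ContDiffAt ℝ 1 (fun x : E2 => Ψ (x, 0)) x₀ := hΨc'.comp x₀ hjc
      exact contDiffAt_snd.comp x₀ h1
    -- near x₀, (Ψ (x,0)).2 solves the Bernoulli relation on the subsonic branch
    have hjt : Filter.Tendsto (fun x : E2 => ((x, (0:ℝ)) : E2 × ℝ)) (nhds x₀) (nhds (x₀, 0)) := by
      exact (Continuous.prodMk continuous_id continuous_const).continuousAt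
    have hrev : ∀ᶠ x in nhds x₀,
        (((Ψ (x, 0)).1, G (Ψ (x, 0))) : E2 × ℝ) = ((x, (0:ℝ)) : E2 × ℝ) := by
      have h := hs.eventually_right_inverse
      simp only [hG0] at h
      filter_upwards [hjt.eventually h] with x hx
      exact hx
    have hv : (Ψ (x₀, 0)).2 = ρ₀ := by rw [hΨ0]
    have hrt : Filter.Tendsto (fun x : E2 => (Ψ (x, 0)).2) (nhds x₀) (nhds ρ₀) := by
      have h1 := hrCD.continuousAt.tendsto
      simp only [hv] at h1
      exact h1
    have hevpos : ∀ᶠ x in nhds x₀, 0 < (Ψ (x, 0)).2 := hrt.eventually (eventually_gt_nhds hρ0pos)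
    have hevbr : ∀ᶠ x in nhds x₀,
        2 * B (ψ x) / ((γ + 1) * A (ψ x)) < (Ψ (x, 0)).2 ^ (γ - 1) := by
      have hc1 : Filter.Tendsto (fun x : E2 => (Ψ (x, 0)).2 ^ (γ - 1)) (nhds x₀)
          (nhds (ρ₀ ^ (γ - 1))) :=
        (Real.continuousAt_rpow_const ρ₀ (γ - 1) (Or.inl hρ0pos.ne')).tendsto.comp hrt
      have hψcont : ContinuousAt ψ x₀ := hψd.continuousAt
      have hc2 : Filter.Tendsto (fun x : E2 => 2 * B (ψ x) / ((γ + 1) * A (ψ x))) (nhds x₀)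
          (nhds (2 * b₀ / ((γ + 1) * a₀))) := by
        have hcc : ContinuousAt (fun x : E2 => 2 * B (ψ x) / ((γ + 1) * A (ψ x))) x₀ :=
          ContinuousAt.div
            (continuousAt_const.mul (hB.continuous.continuousAt.comp hψcont))
            (continuousAt_const.mul (hA.continuous.continuousAt.comp hψcont))
            (by positivity)
        exact hcc.tendsto
      have := (hc1.sub hc2).eventually (eventually_gt_nhds (by linarith : (0:ℝ) < ρ₀ ^ (γ - 1) - 2 * b₀ / ((γ + 1) * a₀)))
      filter_upwards [this] with x hx
      linarith [hx]
    have hevbern : ∀ᶠ x in nhds x₀,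
        (pd 0 ψ x ^ 2 + pd 1 ψ x ^ 2) / 2 =
          B (ψ x) * (Ψ (x, 0)).2 ^ 2 - A (ψ x) * (Ψ (x, 0)).2 ^ (γ + 1) := by
      filter_upwards [hrev] with x hx
      have h1 : (Ψ (x, 0)).1 = x := congrArg Prod.fst hx
      have h2 : G (Ψ (x, 0)) = 0 := congrArg Prod.snd hx
      have h2' : B (ψ (Ψ (x, 0)).1) * ((Ψ (x, 0)).2) ^ 2 -
          A (ψ (Ψ (x, 0)).1) * ((Ψ (x, 0)).2) ^ (γ + 1) -
          (pd 0 ψ (Ψ (x, 0)).1 ^ 2 + pd 1 ψ (Ψ (x, 0)).1 ^ 2) / 2 = 0 := h2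
      rw [h1] at h2'
      linarith [h2']
    have heq : ρf =ᶠ[nhds x₀] (fun x : E2 => (Ψ (x, 0)).2) := by
      filter_upwards [hevpos, hevbr, hevbern, hΩ.eventually_mem hx₀] with x h1 h2 h3 hxΩ
      exact (huniq x hxΩ _ ⟨h1, h2, h3⟩).symm
    exact hrCD.congr_of_eventuallyEq heq
  refine ⟨ρf, hbr, fun x hx => (hCD x hx).contDiffWithinAt, ?_⟩
  intro x hx
  obtain ⟨hρpos, hρbr, hρeq⟩ := hbr x hx
  have hmem : Ω ∈ nhds x := hΩ.mem_nhds hx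
  have hρne : ρf x ≠ 0 := hρpos.ne'
  have hρd : DifferentiableAt ℝ ρf x := (hCD x hx).differentiableAt one_ne_zero
  have hψx : ContDiffAt ℝ 2 ψ x := hψ.contDiffAt hmem
  have hψd : DifferentiableAt ℝ ψ x := hψx.differentiableAt (by norm_num)
  have hpd0d : DifferentiableAt ℝ (pd 0 ψ) x :=
    ((hpdC 0).contDiffAt hmem).differentiableAt one_ne_zero
  have hpd1d : DifferentiableAt ℝ (pd 1 ψ) x :=
    ((hpdC 1).contDiffAt hmem).differentiableAt one_ne_zero
  -- rpow splitting identities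
  have e1 : ρf x ^ (γ + 1) = ρf x ^ (γ - 1) * ρf x ^ 2 := by
    rw [show γ + 1 = γ - 1 + 2 by ring, Real.rpow_add hρpos,
      show ((2:ℝ)) = ((2:ℕ):ℝ) by norm_num, Real.rpow_natCast]
  have e3 : ρf x ^ (γ + 3) = ρf x ^ (γ - 1) * ρf x ^ 4 := by
    rw [show γ + 3 = γ - 1 + 4 by ring, Real.rpow_add hρpos,
      show ((4:ℝ)) = ((4:ℕ):ℝ) by norm_num, Real.rpow_natCast]
  have eg : ρf x ^ γ = ρf x ^ (γ - 1) * ρf x := by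
    have h := Real.rpow_add_one hρne (γ - 1)
    rw [show γ - 1 + 1 = γ by ring] at h
    exact h
  -- the coefficient 2Bρ - (γ+1)Aρ^γ is nonzero
  have hD : 2 * B (ψ x) * ρf x - (γ + 1) * (A (ψ x) * (ρf x ^ (γ - 1) * ρf x)) ≠ 0 := by
    have h2b : 2 * B (ψ x) < (γ + 1) * A (ψ x) * ρf x ^ (γ - 1) := by
      calc 2 * B (ψ x) = (γ + 1) * A (ψ x) * (2 * B (ψ x) / ((γ + 1) * A (ψ x))) := by
            have : (γ + 1) * A (ψ x) ≠ 0 := by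
              have := hApos (ψ x); positivity
            field_simp
            rw [mul_div_assoc, div_self (hApos _).ne', mul_one]
      _ < _ := mul_lt_mul_of_pos_left hρbr (by have := hApos (ψ x); positivity)
    have : 2 * B (ψ x) * ρf x - (γ + 1) * (A (ψ x) * (ρf x ^ (γ - 1) * ρf x)) < 0 := by
      nlinarith [mul_lt_mul_of_pos_right h2b hρpos]
    exact this.ne
  -- differentiate the Bernoulli identity
  have hev : (fun y => pd 0 ψ y ^ 2 + pd 1 ψ y ^ 2) =ᶠ[nhds x]
      (fun y => 2 * (B (ψ y) * ρf y ^ 2 - A (ψ y) * ρf y ^ (γ + 1))) := by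
    filter_upwards [hΩ.eventually_mem hx] with y hy
    have := (hbr y hy).2.2
    linarith
  have hBψ : HasFDerivAt (fun y => B (ψ y)) (deriv B (ψ x) • fderiv ℝ ψ x) x :=
    (hB.differentiable one_ne_zero (ψ x)).hasDerivAt.comp_hasFDerivAt x hψd.hasFDerivAt
  have hAψ : HasFDerivAt (fun y => A (ψ y)) (deriv A (ψ x) • fderiv ℝ ψ x) x :=
    (hA.differentiable one_ne_zero (ψ x)).hasDerivAt.comp_hasFDerivAt x hψd.hasFDerivAt
  have hρ2 : HasFDerivAt (fun y => ρf y ^ 2) ((2 * ρf x) • fderiv ℝ ρf x) x := by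
    have hp : HasDerivAt (fun t : ℝ => t ^ 2) (2 * ρf x) (ρf x) := by
      simpa using hasDerivAt_pow 2 (ρf x)
    exact hp.comp_hasFDerivAt x hρd.hasFDerivAt
  have hργ : HasFDerivAt (fun y => ρf y ^ (γ + 1)) (((γ + 1) * ρf x ^ γ) • fderiv ℝ ρf x) x := by
    have hp : HasDerivAt (fun t : ℝ => t ^ (γ + 1)) ((γ + 1) * ρf x ^ γ) (ρf x) := by
      have := Real.hasDerivAt_rpow_const (x := ρf x) (p := γ + 1) (Or.inl hρne)
      simpa [show γ + 1 - 1 = γ by ring] using this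
    exact hp.comp_hasFDerivAt x hρd.hasFDerivAt
  have hsq0 : HasFDerivAt (fun y => pd 0 ψ y ^ 2) ((2 * pd 0 ψ x) • fderiv ℝ (pd 0 ψ) x) x := by
    have hp : HasDerivAt (fun t : ℝ => t ^ 2) (2 * pd 0 ψ x) (pd 0 ψ x) := by
      simpa using hasDerivAt_pow 2 (pd 0 ψ x)
    exact hp.comp_hasFDerivAt x hpd0d.hasFDerivAt
  have hsq1 : HasFDerivAt (fun y => pd 1 ψ y ^ 2) ((2 * pd 1 ψ x) • fderiv ℝ (pd 1 ψ) x) x := by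
    have hp : HasDerivAt (fun t : ℝ => t ^ 2) (2 * pd 1 ψ x) (pd 1 ψ x) := by
      simpa using hasDerivAt_pow 2 (pd 1 ψ x)
    exact hp.comp_hasFDerivAt x hpd1d.hasFDerivAt
  have hL : HasFDerivAt (fun y => pd 0 ψ y ^ 2 + pd 1 ψ y ^ 2)
      ((2 * pd 0 ψ x) • fderiv ℝ (pd 0 ψ) x + (2 * pd 1 ψ x) • fderiv ℝ (pd 1 ψ) x) x :=
    hsq0.add hsq1
  have hR := (((hBψ.mul hρ2).sub (hAψ.mul hργ)).const_mul 2).congr_of_eventuallyEq hev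
  have hNN := hL.unique hR
  have hstar0 := DFunLike.congr_fun hNN (EuclideanSpace.single 0 1)
  have hstar1 := DFunLike.congr_fun hNN (EuclideanSpace.single 1 1)
  -- bridges between CLM applications and pd
  have c00 : (fderiv ℝ (pd 0 ψ) x) (EuclideanSpace.single 0 1) = pd 0 (pd 0 ψ) x := rfl
  have c01 : (fderiv ℝ (pd 0 ψ) x) (EuclideanSpace.single 1 1) = pd 1 (pd 0 ψ) x := rfl
  have c10 : (fderiv ℝ (pd 1 ψ) x) (EuclideanSpace.single 0 1) = pd 0 (pd 1 ψ) x := rfl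
  have c11 : (fderiv ℝ (pd 1 ψ) x) (EuclideanSpace.single 1 1) = pd 1 (pd 1 ψ) x := rfl
  have cp0 : (fderiv ℝ ψ x) (EuclideanSpace.single 0 1) = pd 0 ψ x := rfl
  have cp1 : (fderiv ℝ ψ x) (EuclideanSpace.single 1 1) = pd 1 ψ x := rfl
  have cr0 : (fderiv ℝ ρf x) (EuclideanSpace.single 0 1) = pd 0 ρf x := rfl
  have cr1 : (fderiv ℝ ρf x) (EuclideanSpace.single 1 1) = pd 1 ρf x := rfl
  simp only [ContinuousLinearMap.add_apply, ContinuousLinearMap.sub_apply,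
    ContinuousLinearMap.smul_apply, smul_eq_mul, c00, c01, c10, c11, cp0, cp1, cr0, cr1,
    e1, eg] at hstar0 hstar1
  have h1 : pd 0 ψ x * pd 0 (pd 0 ψ) x + pd 1 ψ x * pd 0 (pd 1 ψ) x =
      deriv B (ψ x) * pd 0 ψ x * ρf x ^ 2 + 2 * B (ψ x) * ρf x * pd 0 ρf x -
        deriv A (ψ x) * pd 0 ψ x * (ρf x ^ (γ - 1) * ρf x ^ 2) -
        (γ + 1) * (A (ψ x) * (ρf x ^ (γ - 1) * ρf x)) * pd 0 ρf x := by
    linear_combination hstar0 / 2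
  have h2 : pd 0 ψ x * pd 1 (pd 0 ψ) x + pd 1 ψ x * pd 1 (pd 1 ψ) x =
      deriv B (ψ x) * pd 1 ψ x * ρf x ^ 2 + 2 * B (ψ x) * ρf x * pd 1 ρf x -
        deriv A (ψ x) * pd 1 ψ x * (ρf x ^ (γ - 1) * ρf x ^ 2) -
        (γ + 1) * (A (ψ x) * (ρf x ^ (γ - 1) * ρf x)) * pd 1 ρf x := by
    linear_combination hstar1 / 2
  have bern' : (pd 0 ψ x ^ 2 + pd 1 ψ x ^ 2) / 2 =
      B (ψ x) * ρf x ^ 2 - A (ψ x) * (ρf x ^ (γ - 1) * ρf x ^ 2) := by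
    rw [← e1]; exact hρeq
  -- the divergence-form partial derivatives
  have hinv : HasFDerivAt (fun y => (ρf y)⁻¹) ((-(ρf x ^ 2)⁻¹) • fderiv ℝ ρf x) x :=
    (hasDerivAt_inv hρne).comp_hasFDerivAt x hρd.hasFDerivAt
  have hquot0 := hpd0d.hasFDerivAt.mul hinv
  have hquot1 := hpd1d.hasFDerivAt.mul hinv
  have hq0 : pd 0 (fun y => pd 0 ψ y * (ρf y)⁻¹) x =
      (pd 0 (pd 0 ψ) x * ρf x - pd 0 ψ x * pd 0 ρf x) / ρf x ^ 2 := by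
    show (fderiv ℝ (fun y => pd 0 ψ y * (ρf y)⁻¹) x) (EuclideanSpace.single 0 1) = _
    rw [show (fun y => pd 0 ψ y * (ρf y)⁻¹) = (pd 0 ψ * fun y => (ρf y)⁻¹) from rfl, hquot0.fderiv]
    simp only [ContinuousLinearMap.add_apply, ContinuousLinearMap.smul_apply, smul_eq_mul,
      c00, cr0]
    field_simp
    ring
  have hq1 : pd 1 (fun y => pd 1 ψ y * (ρf y)⁻¹) x =
      (pd 1 (pd 1 ψ) x * ρf x - pd 1 ψ x * pd 1 ρf x) / ρf x ^ 2 := by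
    show (fderiv ℝ (fun y => pd 1 ψ y * (ρf y)⁻¹) x) (EuclideanSpace.single 1 1) = _
    rw [show (fun y => pd 1 ψ y * (ρf y)⁻¹) = (pd 1 ψ * fun y => (ρf y)⁻¹) from rfl, hquot1.fderiv]
    simp only [ContinuousLinearMap.add_apply, ContinuousLinearMap.smul_apply, smul_eq_mul,
      c11, cr1]
    field_simp
    ring
  simp only [NonDivEq]
  rw [show (fun y => pd 0 ψ y / ρf y) = fun y => pd 0 ψ y * (ρf y)⁻¹ from
      funext fun y => div_eq_mul_inv _ _,
    show (fun y => pd 1 ψ y / ρf y) = fun y => pd 1 ψ y * (ρf y)⁻¹ from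
      funext fun y => div_eq_mul_inv _ _, hq0, hq1, e1, e3, eg]
  exact keyAlg γ (A (ψ x)) (B (ψ x)) (deriv A (ψ x)) (deriv B (ψ x)) (ρf x)
    (ρf x ^ (γ - 1)) (pd 0 ψ x) (pd 1 ψ x) (pd 0 (pd 0 ψ) x) (pd 1 (pd 1 ψ) x)
    (pd 0 (pd 1 ψ) x) (pd 1 (pd 0 ψ) x) (pd 0 ρf x) (pd 1 ρf x)
    hγ0 hρne hD bern' h1 h2
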